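/- Define W(b,d) = max{W(f) : bs(f) ≤ b, deg(f) = d} (and W(b,d)=0 if no such f exists). Then for all b,d ≥ 1 with the class nonempty, W(b,d) ≤ max over ℓ ∈ {1,…,b} and k ∈ {1,…,d} of ( ℓ·d·2^{−d} + W(b−ℓ, d−k) ). -/

import Mathlib

open MvPolynomial Finset
open scoped Classical

/-- `bval` converts a boolean to the real number 0 or 1. -/
def bval (x : Bool) : ℝ := if x then 1 else 0

/-- `Represents P f` : `P` is the multilinear real polynomial representing the
Boolean function `f : {0,1}^n → {0,1}`. -/
def Represents {n : ℕ} (P : MvPolynomial (Fin n) ℝ) (f : (Fin n → Bool) → Bool) : Prop :=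
  (∀ m ∈ P.support, ∀ i, m i ≤ 1) ∧
  ∀ x : Fin n → Bool, MvPolynomial.eval (fun i => bval (x i)) P = bval (f x)

/-- Flip the `i`-th bit of `x`. -/
def flip1 {n : ℕ} (x : Fin n → Bool) (i : Fin n) : Fin n → Bool :=
  Function.update x i (!(x i))

/-- Coordinate `i` is relevant for `f`. -/
def Relevant {n : ℕ} (f : (Fin n → Bool) → Bool) (i : Fin n) : Prop :=
  ∃ x, f (flip1 x i) ≠ f x

/-- The set of relevant coordinates of `f`. -/
noncomputable def relSet {n : ℕ} (f : (Fin n → Bool) → Bool) : Finset (Fin n) :=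
  Finset.univ.filter fun i => Relevant f i

/-- The influence of coordinate `i` on `f`. -/
noncomputable def influence {n : ℕ} (f : (Fin n → Bool) → Bool) (i : Fin n) : ℝ :=
  ((Finset.univ.filter fun x => f (flip1 x i) ≠ f x).card : ℝ) / 2 ^ n

/-- `degI P i` : the maximal degree of a monomial of `P` containing `x i`. -/
noncomputable def degI {n : ℕ} (P : MvPolynomial (Fin n) ℝ) (i : Fin n) : ℕ :=
  (P.support.filter fun m => m i ≠ 0).sup fun m => m.sum fun _ e => e

/-- `W P f = Σ_{i ∈ R(f)} 2^{-deg_i(f)}`, computed via the representing polynomial `P`. -/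
noncomputable def W {n : ℕ} (P : MvPolynomial (Fin n) ℝ) (f : (Fin n → Bool) → Bool) : ℝ :=
  ∑ i ∈ relSet f, ((2:ℝ) ^ degI P i)⁻¹

/-- Flip the bits of `x` in the block `B`. -/
def flipB {n : ℕ} (x : Fin n → Bool) (B : Finset (Fin n)) : Fin n → Bool :=
  fun j => if j ∈ B then !(x j) else x j

/-- `f` has `b` pairwise disjoint sensitive blocks at some input. -/
def HasSensBlocks {n : ℕ} (f : (Fin n → Bool) → Bool) (b : ℕ) : Prop :=
  ∃ (x : Fin n → Bool) (B : Fin b → Finset (Fin n)),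
    (∀ j k, j ≠ k → Disjoint (B j) (B k)) ∧ ∀ j, f (flipB x (B j)) ≠ f x

/-- The block sensitivity of `f`. -/
noncomputable def bs {n : ℕ} (f : (Fin n → Bool) → Bool) : ℕ :=
  sSup {b | HasSensBlocks f b}

/-- Restriction of `f` fixing the coordinates in `H` according to `α`. -/
def restrict {n : ℕ} (f : (Fin n → Bool) → Bool) (H : Finset (Fin n)) (α : Fin n → Bool) :
    (Fin n → Bool) → Bool :=
  fun x => f fun i => if i ∈ H then α i else x i

/-- The multilinear monomial (exponent vector) with support `S`. -/
noncomputable def monOf {n : ℕ} (S : Finset (Fin n)) : Fin n →₀ ℕ :=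
  ∑ j ∈ S, Finsupp.single j 1


noncomputable section S14sec
namespace S14

variable {n : ℕ}

lemma bval_inj {a b : Bool} (h : bval a = bval b) : a = b := by
  cases a <;> cases b <;> simp [bval] at h ⊢

def mEval (c : Finset (Fin n) → ℝ) (x : Fin n → Bool) : ℝ :=
  ∑ S : Finset (Fin n), c S * ∏ i ∈ S, bval (x i)

def ind (T : Finset (Fin n)) : Fin n → Bool := fun i => decide (i ∈ T)

lemma prod_bval_ind (S T : Finset (Fin n)) :
    (∏ i ∈ S, bval (ind T i)) = if S ⊆ T then 1 else 0 := by
  by_cases h : S ⊆ T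
  · rw [if_pos h]
    apply Finset.prod_eq_one
    intro i hi
    simp [ind, h hi, bval]
  · rw [if_neg h]
    obtain ⟨i, hiS, hiT⟩ := Finset.not_subset.1 h
    exact Finset.prod_eq_zero hiS (by simp [ind, hiT, bval])

lemma mEval_ind (c : Finset (Fin n) → ℝ) (T : Finset (Fin n)) :
    mEval c (ind T) = ∑ S ∈ T.powerset, c S := by
  unfold mEval
  simp only [prod_bval_ind, mul_ite, mul_one, mul_zero]
  rw [← Finset.sum_filter]
  congr 1
  ext S
  simp [Finset.mem_powerset]

lemma mEval_zero (c : Finset (Fin n) → ℝ) (h : ∀ x, mEval c x = 0) : ∀ S, c S = 0 := by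
  intro S
  induction S using Finset.strongInduction with
  | _ S ih =>
    have h1 : mEval c (ind S) = 0 := h _
    rw [mEval_ind] at h1
    rw [← Finset.sum_erase_add _ _ (Finset.mem_powerset_self S)] at h1
    have h2 : ∑ T ∈ (S.powerset).erase S, c T = 0 := by
      apply Finset.sum_eq_zero
      intro T hT
      rw [Finset.mem_erase, Finset.mem_powerset] at hT
      exact ih T (lt_of_le_of_ne hT.2 hT.1)
    rw [h2, zero_add] at h1
    exact h1


def csub (c : Finset (Fin n) → ℝ) (i : Fin n) : Finset (Fin n) → ℝ :=
  fun S => if i ∈ S then 0 else c S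

def cder (c : Finset (Fin n) → ℝ) (i : Fin n) : Finset (Fin n) → ℝ :=
  fun S => if i ∈ S then 0 else c (insert i S)

lemma mEval_indep (c : Finset (Fin n) → ℝ) (i : Fin n)
    (hc : ∀ S, c S ≠ 0 → i ∉ S) (x : Fin n → Bool) (v : Bool) :
    mEval c (Function.update x i v) = mEval c x := by
  unfold mEval
  apply Finset.sum_congr rfl
  intro S _
  by_cases h : c S = 0
  · simp [h]
  · have hi := hc S h
    congr 1
    apply Finset.prod_congr rfl
    intro j hj
    rw [Function.update_of_ne (by rintro rfl; exact hi hj)]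

lemma mEval_split (c : Finset (Fin n) → ℝ) (i : Fin n) (x : Fin n → Bool) :
    mEval c x = mEval (csub c i) x + bval (x i) * mEval (cder c i) x := by
  have e0 : mEval (csub c i) x
      = ∑ S ∈ univ.filter (fun S : Finset (Fin n) => i ∉ S), c S * ∏ j ∈ S, bval (x j) := by
    unfold mEval csub
    simp only [ite_mul, zero_mul]
    rw [Finset.sum_ite, Finset.sum_const_zero, zero_add]
  have e1 : mEval (cder c i) x
      = ∑ S ∈ univ.filter (fun S : Finset (Fin n) => i ∉ S),
          c (insert i S) * ∏ j ∈ S, bval (x j) := by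
    unfold mEval cder
    simp only [ite_mul, zero_mul]
    rw [Finset.sum_ite, Finset.sum_const_zero, zero_add]
  have key : ∑ S ∈ univ.filter (fun S : Finset (Fin n) => i ∈ S), c S * ∏ j ∈ S, bval (x j)
      = ∑ S ∈ univ.filter (fun S : Finset (Fin n) => i ∉ S),
          c (insert i S) * (bval (x i) * ∏ j ∈ S, bval (x j)) := by
    apply Finset.sum_nbij' (fun S => S.erase i) (fun S => insert i S)
    · intro S hS
      simp only [Finset.mem_filter, Finset.mem_univ, true_and] at hS ⊢
      exact Finset.notMem_erase i S
    · intro S hS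
      simp only [Finset.mem_filter, Finset.mem_univ, true_and] at hS ⊢
      exact Finset.mem_insert_self i S
    · intro S hS
      simp only [Finset.mem_filter, Finset.mem_univ, true_and] at hS
      exact Finset.insert_erase hS
    · intro S hS
      simp only [Finset.mem_filter, Finset.mem_univ, true_and] at hS
      exact Finset.erase_insert hS
    · intro S hS
      simp only [Finset.mem_filter, Finset.mem_univ, true_and] at hS
      rw [Finset.insert_erase hS]
      congr 1
      exact (Finset.mul_prod_erase S (fun j => bval (x j)) hS).symm
  rw [e0, e1, Finset.mul_sum]
  unfold mEval
  rw [← Finset.sum_filter_add_sum_filter_not univ (fun S : Finset (Fin n) => i ∈ S), key]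
  rw [add_comm]
  congr 1
  apply Finset.sum_congr rfl
  intro S _
  ring

lemma csub_away (c : Finset (Fin n) → ℝ) (i : Fin n) : ∀ S, csub c i S ≠ 0 → i ∉ S := by
  intro S h hi; simp [csub, hi] at h

lemma cder_away (c : Finset (Fin n) → ℝ) (i : Fin n) : ∀ S, cder c i S ≠ 0 → i ∉ S := by
  intro S h hi; simp [cder, hi] at h

lemma mEval_update_diff (c : Finset (Fin n) → ℝ) (i : Fin n) (x : Fin n → Bool) :
    mEval c (Function.update x i true) - mEval c (Function.update x i false)
      = mEval (cder c i) x := by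
  rw [mEval_split c i (Function.update x i true), mEval_split c i (Function.update x i false)]
  rw [mEval_indep _ _ (csub_away c i), mEval_indep _ _ (csub_away c i),
    mEval_indep _ _ (cder_away c i), mEval_indep _ _ (cder_away c i)]
  simp [bval]

/-- Schwartz–Zippel over the Boolean cube for multilinear polynomials. -/
lemma SZ : ∀ (a : ℕ) (c : Finset (Fin n) → ℝ), (∀ S, c S ≠ 0 → S.card ≤ a) →
    (∃ S, c S ≠ 0) →
    2 ^ n ≤ (univ.filter fun x : Fin n → Bool => mEval c x ≠ 0).card * 2 ^ a := by
  intro a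
  induction a with
  | zero =>
    intro c hdeg ⟨S0, hS0⟩
    have hS0e : S0 = ∅ := Finset.card_eq_zero.1 (Nat.le_zero.1 (hdeg S0 hS0))
    subst hS0e
    have hall : ∀ x : Fin n → Bool, mEval c x ≠ 0 := by
      intro x
      have : mEval c x = c ∅ := by
        unfold mEval
        rw [Finset.sum_eq_single ∅]
        · simp
        · intro S _ hne
          have : c S = 0 := by
            by_contra h
            exact hne (Finset.card_eq_zero.1 (Nat.le_zero.1 (hdeg S h)))
          simp [this]
        · simp
      rw [this]; exact hS0
    have : (univ.filter fun x : Fin n → Bool => mEval c x ≠ 0) = univ := by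
      apply Finset.filter_true_of_mem; intro x _; exact hall x
    rw [this, pow_zero, mul_one]
    simp [Finset.card_univ]
  | succ a ih =>
    intro c hdeg ⟨S0, hS0⟩
    by_cases hex : ∃ S, c S ≠ 0 ∧ S ≠ ∅
    · obtain ⟨S1, hc1, hS1ne⟩ := hex
      obtain ⟨i, hi⟩ := Finset.nonempty_iff_ne_empty.2 hS1ne
      set c1 := cder c i with hc1def
      have hc1ne : ∃ S, c1 S ≠ 0 := by
        refine ⟨S1.erase i, ?_⟩
        simp only [hc1def, cder, Finset.notMem_erase, if_false, Finset.insert_erase hi]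
        exact hc1
      have hc1deg : ∀ S, c1 S ≠ 0 → S.card ≤ a := by
        intro S hS
        have hiS : i ∉ S := by
          by_contra h; simp [hc1def, cder, h] at hS
        have : c (insert i S) ≠ 0 := by
          simpa [hc1def, cder, hiS] using hS
        have := hdeg _ this
        rw [Finset.card_insert_of_notMem hiS] at this
        omega
      have hIH := ih c1 hc1deg hc1ne
      set N' := univ.filter fun x : Fin n → Bool => mEval c1 x ≠ 0 with hN'
      set N := univ.filter fun x : Fin n → Bool => mEval c x ≠ 0 with hN
      set φ : (Fin n → Bool) → (Fin n → Bool) :=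
        fun x => if mEval (csub c i) x ≠ 0 then Function.update x i false
          else Function.update x i true with hφ
      have hval : ∀ (x : Fin n → Bool) (v : Bool), mEval c (Function.update x i v)
          = mEval (csub c i) x + bval v * mEval c1 x := by
        intro x v
        rw [mEval_split c i (Function.update x i v)]
        rw [mEval_indep _ _ (csub_away c i), mEval_indep _ _ (cder_away c i)]
        rw [Function.update_self]
      have hmaps : ∀ x ∈ N', φ x ∈ N := by
        intro x hx
        rw [hN', Finset.mem_filter] at hx
        rw [hN, Finset.mem_filter]
        refine ⟨Finset.mem_univ _, ?_⟩
        simp only [hφ]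
        by_cases h : mEval (csub c i) x ≠ 0
        · rw [if_pos h, hval]
          simpa [bval] using h
        · rw [if_neg h, hval]
          push_neg at h
          rw [h]
          simpa [bval] using hx.2
      have hfib : ∀ b ∈ N, (N'.filter fun x => φ x = b).card ≤ 2 := by
        intro b _
        have hsub : (N'.filter fun x => φ x = b)
            ⊆ {Function.update b i true, Function.update b i false} := by
          intro x hx
          rw [Finset.mem_filter] at hx
          have hxb : x = Function.update b i (x i) := by
            rw [← hx.2]; simp only [hφ]
            by_cases h : mEval (csub c i) x ≠ 0
            · rw [if_pos h, Function.update_idem, Function.update_eq_self]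
            · rw [if_neg h, Function.update_idem, Function.update_eq_self]
          rw [Finset.mem_insert, Finset.mem_singleton]
          cases hv : x i
          · right; rw [hxb, hv]
          · left; rw [hxb, hv]
        exact le_trans (Finset.card_le_card hsub)
          (le_trans (Finset.card_insert_le _ _) (by simp))
      have hmap : N'.card ≤ 2 * N.card :=
        Finset.card_le_mul_card_image_of_maps_to hmaps 2 hfib
      calc 2 ^ n ≤ N'.card * 2 ^ a := hIH
        _ ≤ (2 * N.card) * 2 ^ a := Nat.mul_le_mul_right _ hmap
        _ = N.card * 2 ^ (a + 1) := by ring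
    · push_neg at hex
      have hS0e : S0 = ∅ := hex S0 hS0
      subst hS0e
      have hall : ∀ x : Fin n → Bool, mEval c x ≠ 0 := by
        intro x
        have : mEval c x = c ∅ := by
          unfold mEval
          rw [Finset.sum_eq_single ∅]
          · simp
          · intro S _ hne
            have : c S = 0 := by
              by_contra h; exact hne (hex S h)
            simp [this]
          · simp
        rw [this]; exact hS0
      have : (univ.filter fun x : Fin n → Bool => mEval c x ≠ 0) = univ := by
        apply Finset.filter_true_of_mem; intro x _; exact hall x
      rw [this]
      have : (univ : Finset (Fin n → Bool)).card = 2 ^ n := by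
        simp [Finset.card_univ]
      rw [this]
      exact Nat.le_mul_of_pos_right _ (Nat.pow_pos (by norm_num))


/-! ### Bridge to `MvPolynomial` -/

lemma monOf_apply (S : Finset (Fin n)) (j : Fin n) :
    monOf S j = if j ∈ S then 1 else 0 := by
  unfold monOf
  rw [Finsupp.finset_sum_apply]
  by_cases h : j ∈ S
  · rw [if_pos h, Finset.sum_eq_single j]
    · simp
    · intro j' _ hne
      exact Finsupp.single_eq_of_ne hne.symm
    · intro hj; exact (hj h).elim
  · rw [if_neg h]
    apply Finset.sum_eq_zero
    intro j' hj'
    exact Finsupp.single_eq_of_ne (by rintro rfl; exact h hj')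

lemma monOf_support (S : Finset (Fin n)) : (monOf S).support = S := by
  ext j
  rw [Finsupp.mem_support_iff, monOf_apply]
  by_cases h : j ∈ S <;> simp [h]

lemma monOf_injective : Function.Injective (monOf (n := n)) := by
  intro S T h
  rw [← monOf_support S, ← monOf_support T, h]

lemma monOf_sum (S : Finset (Fin n)) : ((monOf S).sum fun _ e => e) = S.card := by
  rw [Finsupp.sum, monOf_support]
  rw [Finset.card_eq_sum_ones]
  apply Finset.sum_congr rfl
  intro j hj
  rw [monOf_apply, if_pos hj]

lemma eq_monOf_of_ml (m : Fin n →₀ ℕ) (hm : ∀ i, m i ≤ 1) : m = monOf m.support := by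
  ext j
  rw [monOf_apply]
  by_cases h : j ∈ m.support
  · rw [if_pos h]
    have h1 := Finsupp.mem_support_iff.1 h
    have h2 := hm j
    omega
  · rw [if_neg h]
    exact Finsupp.notMem_support_iff.1 h

/-- The multilinear polynomial with coefficient function `c`. -/
def poly (c : Finset (Fin n) → ℝ) : MvPolynomial (Fin n) ℝ :=
  ∑ S : Finset (Fin n), monomial (monOf S) (c S)

lemma coeff_poly (c : Finset (Fin n) → ℝ) (S : Finset (Fin n)) :
    coeff (monOf S) (poly c) = c S := by
  unfold poly
  rw [MvPolynomial.coeff_sum]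
  rw [Finset.sum_eq_single S]
  · rw [coeff_monomial, if_pos rfl]
  · intro T _ hne
    rw [coeff_monomial, if_neg (fun h => hne (monOf_injective h))]
  · simp

lemma mem_support_poly (c : Finset (Fin n) → ℝ) (m : Fin n →₀ ℕ)
    (hm : m ∈ (poly c).support) : ∃ S, c S ≠ 0 ∧ m = monOf S := by
  rw [MvPolynomial.mem_support_iff] at hm
  unfold poly at hm
  rw [MvPolynomial.coeff_sum] at hm
  obtain ⟨S, _, hS⟩ := Finset.exists_ne_zero_of_sum_ne_zero hm
  rw [coeff_monomial] at hS
  by_cases h : monOf S = m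
  · exact ⟨S, by rwa [if_pos h] at hS, h.symm⟩
  · rw [if_neg h] at hS; exact (hS rfl).elim

lemma poly_ml (c : Finset (Fin n) → ℝ) : ∀ m ∈ (poly c).support, ∀ i, m i ≤ 1 := by
  intro m hm i
  obtain ⟨S, _, rfl⟩ := mem_support_poly c m hm
  rw [monOf_apply]
  by_cases h : i ∈ S <;> simp [h]

lemma eval_poly (c : Finset (Fin n) → ℝ) (x : Fin n → Bool) :
    MvPolynomial.eval (fun i => bval (x i)) (poly c) = mEval c x := by
  unfold poly mEval
  rw [map_sum]
  apply Finset.sum_congr rfl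
  intro S _
  rw [MvPolynomial.eval_monomial]
  congr 1
  rw [Finsupp.prod, monOf_support]
  apply Finset.prod_congr rfl
  intro i hi
  rw [monOf_apply, if_pos hi, pow_one]

lemma totalDegree_poly_le (c : Finset (Fin n) → ℝ) (D : ℕ)
    (h : ∀ S, c S ≠ 0 → S.card ≤ D) : (poly c).totalDegree ≤ D := by
  unfold MvPolynomial.totalDegree
  apply Finset.sup_le
  intro m hm
  obtain ⟨S, hS, rfl⟩ := mem_support_poly c m hm
  rw [monOf_sum]
  exact h S hS

/-- `degI'` : combinatorial version of `degI`. -/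
def degI' (c : Finset (Fin n) → ℝ) (i : Fin n) : ℕ :=
  (univ.filter fun S => i ∈ S ∧ c S ≠ 0).sup Finset.card

lemma degI_poly (c : Finset (Fin n) → ℝ) (i : Fin n) :
    degI (poly c) i = degI' c i := by
  unfold degI degI'
  apply le_antisymm
  · apply Finset.sup_le
    intro m hm
    rw [Finset.mem_filter] at hm
    obtain ⟨S, hS, rfl⟩ := mem_support_poly c m hm.1
    rw [monOf_sum]
    apply Finset.le_sup
    rw [Finset.mem_filter]
    refine ⟨Finset.mem_univ _, ?_, hS⟩
    have := hm.2
    rw [monOf_apply] at this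
    by_cases h : i ∈ S
    · exact h
    · rw [if_neg h] at this; exact (this rfl).elim
  · apply Finset.sup_le
    intro S hS
    rw [Finset.mem_filter] at hS
    obtain ⟨-, hiS, hcS⟩ := hS
    have hmem : monOf S ∈ (poly c).support.filter (fun m => m i ≠ 0) := by
      rw [Finset.mem_filter]
      constructor
      · rw [MvPolynomial.mem_support_iff, coeff_poly]; exact hcS
      · rw [monOf_apply, if_pos hiS]; simp
    calc S.card = ((monOf S).sum fun _ e => e) := (monOf_sum S).symm
      _ ≤ _ := Finset.le_sup (f := fun m => m.sum fun _ e => e) hmem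

lemma poly_pOf (P : MvPolynomial (Fin n) ℝ) (hml : ∀ m ∈ P.support, ∀ i, m i ≤ 1) :
    poly (fun S => coeff (monOf S) P) = P := by
  unfold poly
  conv_rhs => rw [← MvPolynomial.support_sum_monomial_coeff P]
  rw [← Finset.sum_filter_ne_zero]
  apply Finset.sum_nbij' (fun S => monOf S) (fun m : Fin n →₀ ℕ => m.support)
  · intro S hS
    rw [Finset.mem_filter] at hS
    rw [MvPolynomial.mem_support_iff]
    exact fun h => hS.2 (by show monomial (monOf S) (coeff (monOf S) P) = 0; rw [h, map_zero])
  · intro m hm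
    rw [Finset.mem_filter]
    refine ⟨Finset.mem_univ _, ?_⟩
    show monomial (monOf m.support) (coeff (monOf m.support) P) ≠ 0
    rw [← eq_monOf_of_ml m (hml m hm)]
    exact fun h => (MvPolynomial.mem_support_iff.1 hm) (MvPolynomial.monomial_eq_zero.1 h)
  · intro S hS
    exact monOf_support S
  · intro m hm
    exact (eq_monOf_of_ml m (hml m hm)).symm
  · intro S hS
    rfl

/-! ### Relevance vs appearance -/

lemma irrelevant_of_not_appears (c : Finset (Fin n) → ℝ) (g : (Fin n → Bool) → Bool)
    (hrep : ∀ x, mEval c x = bval (g x)) (i : Fin n)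
    (h : ∀ S, c S ≠ 0 → i ∉ S) : ∀ x, g (flip1 x i) = g x := by
  intro x
  apply bval_inj
  rw [← hrep, ← hrep]
  exact mEval_indep c i h x _

lemma coeff_zero_of_irrelevant (c : Finset (Fin n) → ℝ) (g : (Fin n → Bool) → Bool)
    (hrep : ∀ x, mEval c x = bval (g x)) (i : Fin n)
    (h : ¬ Relevant g i) : ∀ S, i ∈ S → c S = 0 := by
  have hflip : ∀ x, g (flip1 x i) = g x := by
    intro x
    by_contra hne
    exact h ⟨x, hne⟩
  have hupd : ∀ x : Fin n → Bool,
      g (Function.update x i true) = g (Function.update x i false) := by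
    intro x
    have h1 : flip1 (Function.update x i false) i = Function.update x i true := by
      unfold flip1
      rw [Function.update_self, Function.update_idem]
      rfl
    rw [← h1, hflip]
  have hz : ∀ S, cder c i S = 0 := by
    apply mEval_zero
    intro x
    rw [← mEval_update_diff, hrep, hrep, hupd]
    ring
  intro S hiS
  have := hz (S.erase i)
  rwa [cder, if_neg (Finset.notMem_erase i S), Finset.insert_erase hiS] at this

/-! ### Restriction -/

def qres (p : Finset (Fin n) → ℝ) (H : Finset (Fin n)) (α : Fin n → Bool) :
    Finset (Fin n) → ℝ :=
  fun S => if S ∩ H = ∅ then ∑ T ∈ H.powerset, p (S ∪ T) * ∏ j ∈ T, bval (α j) else 0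

lemma qres_ne_zero {p : Finset (Fin n) → ℝ} {H : Finset (Fin n)} {α : Fin n → Bool}
    {S : Finset (Fin n)} (h : qres p H α S ≠ 0) :
    S ∩ H = ∅ ∧ ∃ T ⊆ H, p (S ∪ T) ≠ 0 := by
  unfold qres at h
  by_cases h1 : S ∩ H = ∅
  · rw [if_pos h1] at h
    refine ⟨h1, ?_⟩
    obtain ⟨T, hT, hTne⟩ := Finset.exists_ne_zero_of_sum_ne_zero h
    refine ⟨T, Finset.mem_powerset.1 hT, ?_⟩
    intro hz
    rw [hz, zero_mul] at hTne
    exact hTne rfl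
  · rw [if_neg h1] at h
    exact (h rfl).elim

lemma mEval_qres (p : Finset (Fin n) → ℝ) (H : Finset (Fin n)) (α : Fin n → Bool)
    (x : Fin n → Bool) :
    mEval (qres p H α) x = mEval p (fun i => if i ∈ H then α i else x i) := by
  have lhs : mEval (qres p H α) x
      = ∑ ST ∈ (univ.filter fun S : Finset (Fin n) => S ∩ H = ∅) ×ˢ H.powerset,
          p (ST.1 ∪ ST.2) * ((∏ j ∈ ST.2, bval (α j)) * ∏ i ∈ ST.1, bval (x i)) := by
    unfold mEval qres
    simp only [ite_mul, zero_mul]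
    rw [Finset.sum_ite, Finset.sum_const_zero, add_zero]
    rw [Finset.sum_product]
    apply Finset.sum_congr rfl
    intro S _
    rw [Finset.sum_mul]
    apply Finset.sum_congr rfl
    intro T _
    ring
  have rhs : mEval p (fun i => if i ∈ H then α i else x i)
      = ∑ S' : Finset (Fin n),
          p S' * ((∏ j ∈ S' ∩ H, bval (α j)) * ∏ i ∈ S' \ H, bval (x i)) := by
    unfold mEval
    apply Finset.sum_congr rfl
    intro S' _
    congr 1
    rw [← Finset.prod_filter_mul_prod_filter_not S' (fun i => i ∈ H)]
    congr 1
    · rw [show S'.filter (fun i => i ∈ H) = S' ∩ H from by ext j; simp [Finset.mem_inter]]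
      apply Finset.prod_congr rfl
      intro j hj
      show bval (if j ∈ H then α j else x j) = _
      rw [if_pos (Finset.mem_inter.1 hj).2]
    · rw [show S'.filter (fun i => ¬ i ∈ H) = S' \ H from by ext j; simp [Finset.mem_sdiff]]
      apply Finset.prod_congr rfl
      intro j hj
      show bval (if j ∈ H then α j else x j) = _
      rw [if_neg (Finset.mem_sdiff.1 hj).2]
  rw [lhs, rhs]
  apply Finset.sum_nbij' (fun ST : Finset (Fin n) × Finset (Fin n) => ST.1 ∪ ST.2)
    (fun S' => (S' \ H, S' ∩ H))
  · intro ST hST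
    exact Finset.mem_univ _
  · intro S' _
    rw [Finset.mem_product]
    constructor
    · rw [Finset.mem_filter]
      refine ⟨Finset.mem_univ _, ?_⟩
      ext j
      simp [Finset.mem_sdiff, Finset.mem_inter]
    · rw [Finset.mem_powerset]
      exact Finset.inter_subset_right
  · intro ST hST
    rw [Finset.mem_product, Finset.mem_filter, Finset.mem_powerset] at hST
    obtain ⟨⟨-, h1⟩, h2⟩ := hST
    ext1
    · show (ST.1 ∪ ST.2) \ H = ST.1
      ext j
      simp only [Finset.mem_sdiff, Finset.mem_union]
      constructor
      · rintro ⟨hj1 | hj2, hjH⟩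
        · exact hj1
        · exact (hjH (h2 hj2)).elim
      · intro hj
        refine ⟨Or.inl hj, ?_⟩
        intro hjH
        exact (Finset.eq_empty_iff_forall_notMem.1 h1) j (Finset.mem_inter.2 ⟨hj, hjH⟩)
    · show (ST.1 ∪ ST.2) ∩ H = ST.2
      ext j
      simp only [Finset.mem_inter, Finset.mem_union]
      constructor
      · rintro ⟨hj1 | hj2, hjH⟩
        · exact ((Finset.eq_empty_iff_forall_notMem.1 h1) j (Finset.mem_inter.2 ⟨hj1, hjH⟩)).elim
        · exact hj2
      · intro hj
        exact ⟨Or.inr hj, h2 hj⟩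
  · intro S' _
    ext j
    simp only [Finset.mem_union, Finset.mem_sdiff, Finset.mem_inter]
    tauto
  · intro ST hST
    rw [Finset.mem_product, Finset.mem_filter, Finset.mem_powerset] at hST
    obtain ⟨⟨-, h1⟩, h2⟩ := hST
    have e1 : (ST.1 ∪ ST.2) ∩ H = ST.2 := by
      ext j
      simp only [Finset.mem_inter, Finset.mem_union]
      constructor
      · rintro ⟨hj1 | hj2, hjH⟩
        · exact ((Finset.eq_empty_iff_forall_notMem.1 h1) j (Finset.mem_inter.2 ⟨hj1, hjH⟩)).elim
        · exact hj2
      · intro hj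
        exact ⟨Or.inr hj, h2 hj⟩
    have e2 : (ST.1 ∪ ST.2) \ H = ST.1 := by
      ext j
      simp only [Finset.mem_sdiff, Finset.mem_union]
      constructor
      · rintro ⟨hj1 | hj2, hjH⟩
        · exact hj1
        · exact (hjH (h2 hj2)).elim
      · intro hj
        refine ⟨Or.inl hj, ?_⟩
        intro hjH
        exact (Finset.eq_empty_iff_forall_notMem.1 h1) j (Finset.mem_inter.2 ⟨hj, hjH⟩)
    rw [e1, e2]

/-- The coefficient of a fixed `S'` in the restriction, as a multilinear function of `α`. -/
def cA (p : Finset (Fin n) → ℝ) (H : Finset (Fin n)) (S' : Finset (Fin n)) :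
    Finset (Fin n) → ℝ :=
  fun T => if T ⊆ H then p (S' ∪ T) else 0

lemma mEval_cA (p : Finset (Fin n) → ℝ) (H : Finset (Fin n)) (S' : Finset (Fin n))
    (hS' : S' ∩ H = ∅) (α : Fin n → Bool) :
    mEval (cA p H S') α = qres p H α S' := by
  unfold mEval cA qres
  rw [if_pos hS']
  simp only [ite_mul, zero_mul]
  rw [Finset.sum_ite, Finset.sum_const_zero, add_zero]
  apply Finset.sum_congr
  · ext T; simp [Finset.mem_powerset]
  · intro T _; rfl

/-! ### Block sensitivity -/

lemma hasSensBlocks_le {f : (Fin n → Bool) → Bool} {b : ℕ} (h : HasSensBlocks f b) :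
    b ≤ n := by
  obtain ⟨x, B, hdisj, hsens⟩ := h
  have hne : ∀ j, (B j).Nonempty := by
    intro j
    rcases Finset.eq_empty_or_nonempty (B j) with h | h
    · exfalso
      apply hsens j
      congr 1
      funext i
      simp [flipB, h]
    · exact h
  calc b = ∑ _j : Fin b, 1 := by simp
    _ ≤ ∑ j : Fin b, (B j).card := Finset.sum_le_sum (fun j _ => (hne j).card_pos)
    _ = (univ.biUnion B).card :=
        (Finset.card_biUnion (fun j _ k _ hjk => hdisj j k hjk)).symm
    _ ≤ (univ : Finset (Fin n)).card := Finset.card_le_card (Finset.subset_univ _)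
    _ = n := by simp

lemma hasSensBlocks_zero (f : (Fin n → Bool) → Bool) : HasSensBlocks f 0 :=
  ⟨fun _ => false, fun j => j.elim0, fun j => j.elim0, fun j => j.elim0⟩

lemma le_bs {f : (Fin n → Bool) → Bool} {t : ℕ} (h : HasSensBlocks f t) : t ≤ bs f :=
  le_csSup ⟨n, fun _ hb => hasSensBlocks_le hb⟩ h

lemma bs_le {f : (Fin n → Bool) → Bool} {M : ℕ}
    (h : ∀ t, HasSensBlocks f t → t ≤ M) : bs f ≤ M :=
  csSup_le ⟨0, hasSensBlocks_zero f⟩ h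

lemma mEval_sub (c e : Finset (Fin n) → ℝ) (x : Fin n → Bool) :
    mEval (fun S => c S - e S) x = mEval c x - mEval e x := by
  unfold mEval
  rw [← Finset.sum_sub_distrib]
  apply Finset.sum_congr rfl
  intro S _
  ring

lemma mEval_const (v : ℝ) (x : Fin n → Bool) :
    mEval (fun S => if S = ∅ then v else 0) x = v := by
  unfold mEval
  rw [Finset.sum_eq_single ∅]
  · simp
  · intro T _ hne
    show (if T = ∅ then v else 0) * _ = 0
    rw [if_neg hne, zero_mul]
  · simp

/-- Inside the support of any maximal-degree coefficient set there is a sensitive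
block at every base point. -/
lemma exists_block_in_top (p : Finset (Fin n) → ℝ) (f : (Fin n → Bool) → Bool)
    (hrep : ∀ x, mEval p x = bval (f x)) (d : ℕ)
    (hdeg : ∀ S, p S ≠ 0 → S.card ≤ d) (S0 : Finset (Fin n)) (hSp : p S0 ≠ 0)
    (hScard : S0.card = d) (hSne : S0.Nonempty) (z : Fin n → Bool) :
    ∃ B ⊆ S0, f (flipB z B) ≠ f z := by
  set H' := (univ : Finset (Fin n)) \ S0 with hH'
  set q' := qres p H' z with hq'
  set g' := restrict f H' z with hg'
  have hrep' : ∀ x, mEval q' x = bval (g' x) := by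
    intro x
    rw [hq', mEval_qres, hrep]
    rfl
  have hq'S0 : q' S0 = p S0 := by
    rw [hq']
    unfold qres
    rw [if_pos (by rw [hH']; ext j; simp)]
    rw [Finset.sum_eq_single ∅]
    · simp
    · intro T hT hTne
      have hTH : T ⊆ H' := Finset.mem_powerset.1 hT
      have hdisj : Disjoint S0 T := by
        apply Finset.disjoint_left.2
        intro a ha haT
        have := hTH haT
        rw [hH', Finset.mem_sdiff] at this
        exact this.2 ha
      have : (S0 ∪ T).card = d + T.card := by
        rw [Finset.card_union_of_disjoint hdisj, hScard]
      have hTpos : 0 < T.card := Finset.card_pos.2 (Finset.nonempty_iff_ne_empty.2 hTne)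
      have : p (S0 ∪ T) = 0 := by
        by_contra h
        have := hdeg _ h
        omega
      rw [this, zero_mul]
    · simp
  have hnc : ∃ y, g' y ≠ g' z := by
    by_contra h
    push_neg at h
    have hz : ∀ S, q' S - (if S = ∅ then bval (g' z) else 0) = 0 := by
      apply mEval_zero (fun S => q' S - (if S = ∅ then bval (g' z) else 0))
      intro x
      rw [mEval_sub, mEval_const, hrep', h x]
      ring
    have := hz S0
    rw [if_neg (Finset.nonempty_iff_ne_empty.1 hSne)] at this
    rw [hq'S0] at this
    exact hSp (by linarith)
  obtain ⟨y, hy⟩ := hnc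
  refine ⟨S0.filter (fun i => y i ≠ z i), Finset.filter_subset _ _, ?_⟩
  have e1 : flipB z (S0.filter (fun i => y i ≠ z i)) = fun i => if i ∈ H' then z i else y i := by
    funext i
    unfold flipB
    by_cases hiS : i ∈ S0
    · have hiH : i ∉ H' := by rw [hH', Finset.mem_sdiff]; tauto
      rw [if_neg hiH]
      by_cases hyz : y i ≠ z i
      · rw [if_pos (Finset.mem_filter.2 ⟨hiS, hyz⟩)]
        cases hzi : z i <;> cases hyi : y i <;> simp_all
      · have hnm : i ∉ S0.filter (fun i => y i ≠ z i) :=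
          fun hm => hyz (Finset.mem_filter.1 hm).2
        rw [if_neg hnm]
        push_neg at hyz
        exact hyz.symm
    · have hiH : i ∈ H' := by rw [hH', Finset.mem_sdiff]; exact ⟨Finset.mem_univ _, hiS⟩
      have hnm : i ∉ S0.filter (fun i => y i ≠ z i) :=
        fun hm => hiS (Finset.mem_filter.1 hm).1
      rw [if_pos hiH, if_neg hnm]
  have e2 : f (flipB z (S0.filter (fun i => y i ≠ z i))) = g' y := by
    rw [e1, hg']
    rfl
  have e3 : g' z = f z := by
    rw [hg']
    unfold _root_.restrict
    congr 1
    funext i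
    by_cases h : i ∈ H' <;> simp [h]
  rw [e2, ← e3]
  exact hy

/-! ### Averaging lemma -/

lemma averaging (p : Finset (Fin n) → ℝ) (H : Finset (Fin n)) (i : Fin n)
    (hiH : i ∉ H) (t : ℕ) (ht : degI' p i = t) (hit : ∃ S, i ∈ S ∧ p S ≠ 0) :
    (2:ℝ)^n * ((2:ℝ)^t)⁻¹ ≤ ∑ α : Fin n → Bool,
      (if ∃ S, i ∈ S ∧ qres p H α S ≠ 0 then ((2:ℝ) ^ degI' (qres p H α) i)⁻¹ else 0) := by
  have hcard_le : ∀ S, i ∈ S → p S ≠ 0 → S.card ≤ t := by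
    intro S hiS hS
    rw [← ht]
    exact Finset.le_sup (f := Finset.card)
      (Finset.mem_filter.2 ⟨Finset.mem_univ _, hiS, hS⟩)
  have hq_le : ∀ (α : Fin n → Bool) (S : Finset (Fin n)),
      i ∈ S → qres p H α S ≠ 0 → S.card ≤ t := by
    intro α S hiS hS
    obtain ⟨hSH, T, hTH, hpT⟩ := qres_ne_zero hS
    exact le_trans (Finset.card_le_card Finset.subset_union_left)
      (hcard_le _ (Finset.mem_union_left _ hiS) hpT)
  have hdegI_le : ∀ α : Fin n → Bool, degI' (qres p H α) i ≤ t := by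
    intro α
    apply Finset.sup_le
    intro S hS
    rw [Finset.mem_filter] at hS
    exact hq_le α S hS.2.1 hS.2.2
  obtain ⟨Sx, hiSx, hpSx⟩ := hit
  have hex : ∃ (α : Fin n → Bool) (S : Finset (Fin n)), i ∈ S ∧ qres p H α S ≠ 0 := by
    set S := Sx \ H with hSdef
    have hSH : S ∩ H = ∅ := by ext j; simp [hSdef]
    have hcne : ∃ T, cA p H S T ≠ 0 := by
      refine ⟨Sx ∩ H, ?_⟩
      unfold cA
      rw [if_pos Finset.inter_subset_right]
      have hU : S ∪ Sx ∩ H = Sx := by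
        rw [hSdef]; ext j; simp; tauto
      rw [hU]; exact hpSx
    have hα : ∃ α, mEval (cA p H S) α ≠ 0 := by
      by_contra h
      push_neg at h
      obtain ⟨T, hT⟩ := hcne
      exact hT (mEval_zero _ h T)
    obtain ⟨α, hα⟩ := hα
    rw [mEval_cA _ _ _ hSH] at hα
    exact ⟨α, S, Finset.mem_sdiff.2 ⟨hiSx, hiH⟩, hα⟩
  set s := univ.sup (fun α : Fin n → Bool => degI' (qres p H α) i) with hs
  obtain ⟨α0, S0, hiS0, hq0⟩ := hex
  have hspos : 0 < s := by
    have h1 : S0.card ≤ degI' (qres p H α0) i :=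
      Finset.le_sup (f := Finset.card)
        (Finset.mem_filter.2 ⟨Finset.mem_univ _, hiS0, hq0⟩)
    have h2 : degI' (qres p H α0) i ≤ s := by
      rw [hs]
      exact Finset.le_sup (f := fun α : Fin n → Bool => degI' (qres p H α) i)
        (Finset.mem_univ α0)
    have h3 : 0 < S0.card := Finset.card_pos.2 ⟨i, hiS0⟩
    omega
  obtain ⟨αs, -, hαs⟩ := Finset.exists_mem_eq_sup univ Finset.univ_nonempty
      (fun α : Fin n → Bool => degI' (qres p H α) i)
  have hst : s ≤ t := by
    rw [hs, hαs]
    exact hdegI_le αs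
  have hfilne : (univ.filter fun S => i ∈ S ∧ qres p H αs S ≠ 0).Nonempty := by
    by_contra h
    rw [Finset.not_nonempty_iff_eq_empty] at h
    have h0 : degI' (qres p H αs) i = 0 := by
      unfold degI'
      rw [h]
      rfl
    rw [← hαs, ← hs] at h0
    omega
  obtain ⟨S', hS'mem, hS'card⟩ :=
    Finset.exists_mem_eq_sup _ hfilne (Finset.card (α := Fin n))
  rw [Finset.mem_filter] at hS'mem
  obtain ⟨-, hiS', hqS'⟩ := hS'mem
  obtain ⟨hS'H, -⟩ := qres_ne_zero hqS'
  have hS'cards : S'.card = s := by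
    have : degI' (qres p H αs) i = S'.card := hS'card
    rw [← hαs, ← hs] at this
    omega
  have hc'deg : ∀ T, cA p H S' T ≠ 0 → T.card ≤ t - s := by
    intro T hT
    unfold cA at hT
    by_cases hTH : T ⊆ H
    · rw [if_pos hTH] at hT
      have hcard := hcard_le (S' ∪ T) (Finset.mem_union_left _ hiS') hT
      have hdisj : Disjoint S' T := by
        rw [Finset.disjoint_left]
        intro a ha haT
        exact (Finset.eq_empty_iff_forall_notMem.1 hS'H) a
          (Finset.mem_inter.2 ⟨ha, hTH haT⟩)
      have hu := Finset.card_union_of_disjoint hdisj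
      omega
    · rw [if_neg hTH] at hT; exact (hT rfl).elim
  have hc'ne : ∃ T, cA p H S' T ≠ 0 := by
    by_contra h
    push_neg at h
    have h0 : mEval (cA p H S') αs = 0 := by
      unfold mEval
      apply Finset.sum_eq_zero
      intro T _
      rw [h T, zero_mul]
    rw [mEval_cA _ _ _ hS'H] at h0
    exact hqS' h0
  have hSZ := SZ (t - s) (cA p H S') hc'deg hc'ne
  set N := univ.filter fun α : Fin n → Bool => mEval (cA p H S') α ≠ 0 with hN
  have hNsub : ∀ α ∈ N, ((2:ℝ)^s)⁻¹
      ≤ (if ∃ S, i ∈ S ∧ qres p H α S ≠ 0 then ((2:ℝ) ^ degI' (qres p H α) i)⁻¹ else 0) := by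
    intro α hα
    rw [hN, Finset.mem_filter] at hα
    have hq : qres p H α S' ≠ 0 := by
      rw [← mEval_cA _ _ _ hS'H]
      exact hα.2
    rw [if_pos ⟨S', hiS', hq⟩]
    have hle : degI' (qres p H α) i ≤ s := by
      rw [hs]
      exact Finset.le_sup (f := fun α : Fin n → Bool => degI' (qres p H α) i)
        (Finset.mem_univ α)
    apply inv_anti₀
    · positivity
    · exact pow_le_pow_right₀ (by norm_num) hle
  have hcast : (2:ℝ)^n ≤ (N.card : ℝ) * 2^(t-s) := by
    have := hSZ
    exact_mod_cast this
  have h2t : ((2:ℝ)^(t-s)) * ((2:ℝ)^s) = (2:ℝ)^t := by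
    rw [← pow_add]
    congr 1
    omega
  have key : ((2:ℝ)^(t-s)) * ((2:ℝ)^t)⁻¹ = ((2:ℝ)^s)⁻¹ := by
    rw [← h2t]
    rw [mul_inv]
    rw [← mul_assoc, mul_inv_cancel₀ (by positivity), one_mul]
  calc (2:ℝ)^n * ((2:ℝ)^t)⁻¹
      ≤ ((N.card : ℝ) * 2^(t-s)) * ((2:ℝ)^t)⁻¹ := by
        apply mul_le_mul_of_nonneg_right hcast
        positivity
    _ = (N.card : ℝ) * (((2:ℝ)^(t-s)) * ((2:ℝ)^t)⁻¹) := by ring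
    _ = (N.card : ℝ) * ((2:ℝ)^s)⁻¹ := by rw [key]
    _ = ∑ _α ∈ N, ((2:ℝ)^s)⁻¹ := by
        rw [Finset.sum_const, nsmul_eq_mul]
    _ ≤ ∑ α ∈ N,
        (if ∃ S, i ∈ S ∧ qres p H α S ≠ 0 then ((2:ℝ) ^ degI' (qres p H α) i)⁻¹ else 0) :=
        Finset.sum_le_sum hNsub
    _ ≤ ∑ α : Fin n → Bool,
        (if ∃ S, i ∈ S ∧ qres p H α S ≠ 0 then ((2:ℝ) ^ degI' (qres p H α) i)⁻¹ else 0) := by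
        apply Finset.sum_le_sum_of_subset_of_nonneg (Finset.subset_univ N)
        intro α _ _
        by_cases h : ∃ S, i ∈ S ∧ qres p H α S ≠ 0
        · rw [if_pos h]; positivity
        · rw [if_neg h]

end S14
end S14sec

/-- recursion for `W(b,d)`: for every `f` with `bs(f) ≤ b` and
`deg(f) = d` (`b, d ≥ 1`) there are `ℓ ∈ {1,…,b}` and `k ∈ {1,…,d}` such that
`W(f) ≤ ℓ·d·2^{-d} + W(b-ℓ, d-k)`, where `W(b-ℓ, d-k)` is expressed via an arbitrary
upper bound `U` on `W(g)` over all `g` with `bs(g) ≤ b-ℓ` and `deg(g) ≤ d-k`. -/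
theorem stmt_14 (b d : ℕ) (hb : 1 ≤ b) (hd : 1 ≤ d)
    {n : ℕ} (f : (Fin n → Bool) → Bool) (P : MvPolynomial (Fin n) ℝ)
    (hP : Represents P f) (hbs : bs f ≤ b) (hdeg : P.totalDegree = d) :
    ∃ ℓ k : ℕ, 1 ≤ ℓ ∧ ℓ ≤ b ∧ 1 ≤ k ∧ k ≤ d ∧
      ∀ U : ℝ,
        (∀ (m : ℕ) (g : (Fin m → Bool) → Bool) (Q : MvPolynomial (Fin m) ℝ),
          Represents Q g → bs g ≤ b - ℓ → Q.totalDegree ≤ d - k → W Q g ≤ U) →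
        W P f ≤ (ℓ : ℝ) * (d : ℝ) * ((2:ℝ) ^ d)⁻¹ + U := by
  classical
  obtain ⟨hml, heval⟩ := hP
  set p : Finset (Fin n) → ℝ := fun S => MvPolynomial.coeff (monOf S) P with hp
  have hpoly : S14.poly p = P := S14.poly_pOf P hml
  have hrep : ∀ x, S14.mEval p x = bval (f x) := by
    intro x
    rw [← S14.eval_poly p x, hpoly]
    exact heval x
  have hdle : ∀ S, p S ≠ 0 → S.card ≤ d := by
    intro S hS
    have hm : monOf S ∈ P.support := MvPolynomial.mem_support_iff.2 hS
    have := MvPolynomial.le_totalDegree hm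
    rwa [S14.monOf_sum, hdeg] at this
  -- a top-degree coefficient set
  have hP0 : P ≠ 0 := by
    intro h
    rw [h] at hdeg
    simp [MvPolynomial.totalDegree_zero] at hdeg
    omega
  have htop : ∃ S, p S ≠ 0 ∧ S.card = d := by
    obtain ⟨m, hmmem, hmsum⟩ := Finset.exists_mem_eq_sup P.support
      (MvPolynomial.support_nonempty.2 hP0) (fun m => m.sum fun _ e => e)
    refine ⟨m.support, ?_, ?_⟩
    · show MvPolynomial.coeff (monOf m.support) P ≠ 0
      rw [← S14.eq_monOf_of_ml m (hml m hmmem)]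
      exact MvPolynomial.mem_support_iff.1 hmmem
    · have h1 : (m.sum fun _ e => e) = d := by
        rw [← hmsum]
        exact hdeg.symm ▸ rfl
      have h2 := S14.monOf_sum m.support
      rw [← S14.eq_monOf_of_ml m (hml m hmmem)] at h2
      omega
  obtain ⟨Stop, hStopne, hStopcard⟩ := htop
  -- maximal pairwise-disjoint family of top sets
  set Tfam : Finset (Finset (Fin n)) :=
    univ.filter (fun S => p S ≠ 0 ∧ S.card = d) with hTfam
  have hStopTfam : Stop ∈ Tfam := Finset.mem_filter.2 ⟨Finset.mem_univ _, hStopne, hStopcard⟩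
  set Pfam : Finset (Finset (Finset (Fin n))) :=
    Tfam.powerset.filter (fun F => ∀ S1 ∈ F, ∀ S2 ∈ F, S1 ≠ S2 → Disjoint S1 S2) with hPfam
  have hsingle : {Stop} ∈ Pfam := by
    rw [hPfam, Finset.mem_filter, Finset.mem_powerset]
    refine ⟨Finset.singleton_subset_iff.2 hStopTfam, ?_⟩
    intro S1 h1 S2 h2 hne
    rw [Finset.mem_singleton] at h1 h2
    exact (hne (h1.trans h2.symm)).elim
  obtain ⟨F, hFPfam, hFmax⟩ := Finset.exists_max_image Pfam Finset.card ⟨{Stop}, hsingle⟩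
  rw [hPfam, Finset.mem_filter, Finset.mem_powerset] at hFPfam
  obtain ⟨hFTfam, hFdisj⟩ := hFPfam
  set ℓ := F.card with hℓ
  have hℓ1 : 1 ≤ ℓ := by
    have := hFmax {Stop} hsingle
    simpa using this
  set H := F.biUnion id with hH
  have hHcard : H.card ≤ ℓ * d := by
    calc H.card ≤ ∑ S ∈ F, (id S).card := Finset.card_biUnion_le
      _ = ∑ S ∈ F, d := by
          apply Finset.sum_congr rfl
          intro S hS
          have := hFTfam hS
          rw [hTfam, Finset.mem_filter] at this
          exact this.2.2
      _ = ℓ * d := by rw [Finset.sum_const, smul_eq_mul]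
  have hmeet : ∀ S ∈ Tfam, S ∩ H ≠ ∅ := by
    intro S hSTfam hSH
    have hSne : S ≠ ∅ := by
      rw [hTfam, Finset.mem_filter] at hSTfam
      intro h
      rw [h] at hSTfam
      simp at hSTfam
      omega
    have hdisjall : ∀ S' ∈ F, Disjoint S S' := by
      intro S' hS'
      rw [Finset.disjoint_left]
      intro a haS haS'
      exact (Finset.eq_empty_iff_forall_notMem.1 hSH) a
        (Finset.mem_inter.2 ⟨haS, Finset.mem_biUnion.2 ⟨S', hS', haS'⟩⟩)
    have hSnF : S ∉ F := by
      intro hSF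
      have := hdisjall S hSF
      rw [_root_.disjoint_self] at this
      exact hSne (by simpa using this)
    have hins : insert S F ∈ Pfam := by
      rw [hPfam, Finset.mem_filter, Finset.mem_powerset]
      constructor
      · exact Finset.insert_subset hSTfam hFTfam
      · intro S1 h1 S2 h2 hne
        rw [Finset.mem_insert] at h1 h2
        rcases h1 with rfl | h1
        · rcases h2 with rfl | h2
          · exact (hne rfl).elim
          · exact hdisjall S2 h2
        · rcases h2 with rfl | h2
          · exact (hdisjall S1 h1).symm
          · exact hFdisj S1 h1 S2 h2 hne
    have := hFmax _ hins
    rw [Finset.card_insert_of_notMem hSnF] at this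
    omega
  -- blocks inside the family
  have hblocks : ∀ z : Fin n → Bool, ∀ S ∈ F, ∃ B ⊆ S, f (flipB z B) ≠ f z := by
    intro z S hSF
    have hSTfam := hFTfam hSF
    rw [hTfam, Finset.mem_filter] at hSTfam
    exact S14.exists_block_in_top p f hrep d hdle S hSTfam.2.1 hSTfam.2.2
      (Finset.card_pos.1 (by omega)) z
  set e := F.equivFin with he
  have hblkinj : ∀ j k : Fin ℓ, j ≠ k → (e.symm j : Finset (Fin n)) ≠ (e.symm k : Finset (Fin n)) := by
    intro j k hjk h
    exact hjk (by
      have := Subtype.ext (p := fun x => x ∈ F) h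
      have := e.symm.injective this
      exact this)
  have hblkmem : ∀ j : Fin ℓ, (e.symm j : Finset (Fin n)) ∈ F := fun j => (e.symm j).2
  have hfam : ∀ z : Fin n → Bool, ∃ C : Fin ℓ → Finset (Fin n),
      (∀ j, C j ⊆ (e.symm j : Finset (Fin n))) ∧ ∀ j, f (flipB z (C j)) ≠ f z := by
    intro z
    have : ∀ j : Fin ℓ, ∃ B ⊆ (e.symm j : Finset (Fin n)), f (flipB z B) ≠ f z :=
      fun j => hblocks z _ (hblkmem j)
    choose C h1 h2 using this
    exact ⟨C, h1, h2⟩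
  -- ℓ ≤ b
  have hℓb : ℓ ≤ b := by
    obtain ⟨C, hC1, hC2⟩ := hfam (fun _ => false)
    have : HasSensBlocks f ℓ := by
      refine ⟨fun _ => false, C, ?_, hC2⟩
      intro j k hjk
      exact Finset.disjoint_of_subset_left (hC1 j) (Finset.disjoint_of_subset_right (hC1 k)
        (hFdisj _ (hblkmem j) _ (hblkmem k) (hblkinj j k hjk)))
    exact le_trans (S14.le_bs this) hbs
  -- degree drop
  have hdrop : ∀ (α : Fin n → Bool) (S : Finset (Fin n)),
      S14.qres p H α S ≠ 0 → S.card ≤ d - 1 := by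
    intro α S hS
    obtain ⟨hSH, T, hTH, hpT⟩ := S14.qres_ne_zero hS
    have h1 : (S ∪ T).card ≤ d := hdle _ hpT
    have h2 : S.card ≤ (S ∪ T).card := Finset.card_le_card Finset.subset_union_left
    by_contra h
    push_neg at h
    have hSd : S.card = d := by omega
    have hST : S ∪ T = S := by
      exact (Finset.eq_of_subset_of_card_le (Finset.subset_union_left : S ⊆ S ∪ T) (by omega)).symm
    have hpS : p S ≠ 0 := by rwa [← hST]
    exact hmeet S (Finset.mem_filter.2 ⟨Finset.mem_univ _, hpS, hSd⟩) hSH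
  set Dq : (Fin n → Bool) → ℕ :=
    fun α => (univ.filter fun S => S14.qres p H α S ≠ 0).sup Finset.card with hDq
  set K := univ.sup Dq with hK
  have hK1 : K ≤ d - 1 := by
    rw [hK]
    apply Finset.sup_le
    intro α _
    rw [hDq]
    apply Finset.sup_le
    intro S hS
    rw [Finset.mem_filter] at hS
    exact hdrop α S hS.2
  refine ⟨ℓ, d - K, hℓ1, hℓb, by omega, by omega, ?_⟩
  intro U hU
  -- per-α data
  set g : (Fin n → Bool) → (Fin n → Bool) → Bool := fun α => restrict f H α with hg
  set Q : (Fin n → Bool) → MvPolynomial (Fin n) ℝ :=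
    fun α => S14.poly (S14.qres p H α) with hQ
  have hrepα : ∀ α x, S14.mEval (S14.qres p H α) x = bval (g α x) := by
    intro α x
    rw [S14.mEval_qres, hrep]
    rfl
  have hReprα : ∀ α, Represents (Q α) (g α) := by
    intro α
    refine ⟨S14.poly_ml _, ?_⟩
    intro x
    rw [hQ]
    rw [S14.eval_poly]
    exact hrepα α x
  have hdegα : ∀ α, (Q α).totalDegree ≤ d - (d - K) := by
    intro α
    have hKd : d - (d - K) = K := by omega
    rw [hKd, hQ]
    apply S14.totalDegree_poly_le
    intro S hS
    calc S.card ≤ Dq α := by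
          rw [hDq]
          exact Finset.le_sup (f := Finset.card) (Finset.mem_filter.2 ⟨Finset.mem_univ _, hS⟩)
      _ ≤ K := by
          rw [hK]
          exact Finset.le_sup (Finset.mem_univ α)
  have hbsα : ∀ α, bs (g α) ≤ b - ℓ := by
    intro α
    apply S14.bs_le
    intro t ht
    obtain ⟨x, B, hdisj, hsens⟩ := ht
    set x' : Fin n → Bool := fun i => if i ∈ H then α i else x i with hx'
    obtain ⟨C, hC1, hC2⟩ := hfam x'
    have hCH : ∀ j, C j ⊆ H := by
      intro j
      apply (hC1 j).trans
      intro a ha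
      exact Finset.mem_biUnion.2 ⟨_, hblkmem j, ha⟩
    have hsens' : ∀ j : Fin t, f (flipB x' (B j \ H)) ≠ f x' := by
      intro j
      have h1 : g α (flipB x (B j)) = f (flipB x' (B j \ H)) := by
        show f (fun i => if i ∈ H then α i else flipB x (B j) i) = f (flipB x' (B j \ H))
        congr 1
        funext i
        simp only [flipB, hx']
        by_cases h : i ∈ H
        · rw [if_pos h, if_neg (show i ∉ B j \ H by rw [Finset.mem_sdiff]; tauto), if_pos h]
        · rw [if_neg h]
          by_cases hB : i ∈ B j
          · rw [if_pos hB, if_pos (Finset.mem_sdiff.2 ⟨hB, h⟩), if_neg h]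
          · rw [if_neg hB, if_neg (show i ∉ B j \ H by rw [Finset.mem_sdiff]; tauto), if_neg h]
      have h2 : g α x = f x' := rfl
      rw [← h1, ← h2]
      exact hsens j
    have hcomb : HasSensBlocks f (t + ℓ) := by
      refine ⟨x', fun j => if h : (j : ℕ) < t then B ⟨(j : ℕ), h⟩ \ H
        else C ⟨(j : ℕ) - t, by omega⟩, ?_, ?_⟩
      · intro j k hjk
        dsimp only
        by_cases hj : (j : ℕ) < t <;> by_cases hk : (k : ℕ) < t
        · rw [dif_pos hj, dif_pos hk]
          apply Finset.disjoint_of_subset_left Finset.sdiff_subset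
          apply Finset.disjoint_of_subset_right Finset.sdiff_subset
          apply hdisj
          intro h
          apply hjk
          have : (j : ℕ) = (k : ℕ) := by
            have := congrArg (fun z : Fin t => (z : ℕ)) h
            simpa using this
          exact Fin.ext this
        · rw [dif_pos hj, dif_neg hk]
          exact Finset.disjoint_of_subset_right (hCH _) Finset.sdiff_disjoint
        · rw [dif_neg hj, dif_pos hk]
          exact (Finset.disjoint_of_subset_right (hCH _) Finset.sdiff_disjoint).symm
        · rw [dif_neg hj, dif_neg hk]
          apply Finset.disjoint_of_subset_left (hC1 _)
          apply Finset.disjoint_of_subset_right (hC1 _)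
          apply hFdisj _ (hblkmem _) _ (hblkmem _)
          apply hblkinj
          intro h
          apply hjk
          have : ((⟨(j : ℕ) - t, by omega⟩ : Fin ℓ) : ℕ) = ((⟨(k : ℕ) - t, by omega⟩ : Fin ℓ) : ℕ) := by
            rw [h]
          simp at this
          apply Fin.ext
          omega
      · intro j
        dsimp only
        by_cases hj : (j : ℕ) < t
        · rw [dif_pos hj]
          exact hsens' _
        · rw [dif_neg hj]
          exact hC2 _
    have := le_trans (S14.le_bs hcomb) hbs
    omega
  have hWα : ∀ α, W (Q α) (g α) ≤ U := fun α => hU n (g α) (Q α) (hReprα α) (hbsα α) (hdegα α)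
  -- the weight sum
  have hdegIP : ∀ i, degI P i = S14.degI' p i := by
    intro i
    rw [← hpoly, S14.degI_poly]
  set φ : (Fin n → Bool) → Fin n → ℝ := fun α i =>
    if ∃ S, i ∈ S ∧ S14.qres p H α S ≠ 0 then ((2:ℝ) ^ S14.degI' (S14.qres p H α) i)⁻¹ else 0
    with hφ
  have hφnonneg : ∀ α i, 0 ≤ φ α i := by
    intro α i
    simp only [hφ]
    by_cases h : ∃ S, i ∈ S ∧ S14.qres p H α S ≠ 0
    · rw [if_pos h]; positivity
    · rw [if_neg h]
  have hφW : ∀ α, ∑ i ∈ (relSet f).filter (fun i => i ∉ H), φ α i ≤ W (Q α) (g α) := by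
    intro α
    calc ∑ i ∈ (relSet f).filter (fun i => i ∉ H), φ α i
        = ∑ i ∈ ((relSet f).filter (fun i => i ∉ H)).filter
            (fun i => ∃ S, i ∈ S ∧ S14.qres p H α S ≠ 0),
            ((2:ℝ) ^ S14.degI' (S14.qres p H α) i)⁻¹ := by
          simp only [hφ]
          rw [← Finset.sum_filter]
      _ = ∑ i ∈ ((relSet f).filter (fun i => i ∉ H)).filter
            (fun i => ∃ S, i ∈ S ∧ S14.qres p H α S ≠ 0),
            ((2:ℝ) ^ degI (Q α) i)⁻¹ := by
          apply Finset.sum_congr rfl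
          intro i _
          rw [hQ, S14.degI_poly]
      _ ≤ W (Q α) (g α) := by
          unfold W
          apply Finset.sum_le_sum_of_subset_of_nonneg
          · intro i hi
            rw [Finset.mem_filter] at hi
            obtain ⟨S', hiS', hq⟩ := hi.2
            rw [relSet, Finset.mem_filter]
            refine ⟨Finset.mem_univ _, ?_⟩
            by_contra hrel
            exact hq (S14.coeff_zero_of_irrelevant _ _ (hrepα α) i hrel S' hiS')
          · intro i _ _
            positivity
  have hWsplit : W P f = (∑ i ∈ (relSet f).filter (fun i => i ∈ H), ((2:ℝ) ^ degI P i)⁻¹)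
      + ∑ i ∈ (relSet f).filter (fun i => i ∉ H), ((2:ℝ) ^ degI P i)⁻¹ := by
    unfold W
    rw [Finset.sum_filter_add_sum_filter_not]
  have hpartA : ∑ i ∈ (relSet f).filter (fun i => i ∈ H), ((2:ℝ) ^ degI P i)⁻¹
      ≤ (ℓ : ℝ) * (d : ℝ) * ((2:ℝ)^d)⁻¹ := by
    have hterm : ∀ i ∈ (relSet f).filter (fun i => i ∈ H),
        ((2:ℝ) ^ degI P i)⁻¹ ≤ ((2:ℝ)^d)⁻¹ := by
      intro i hi
      rw [Finset.mem_filter] at hi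
      obtain ⟨S, hSF, hiS⟩ := Finset.mem_biUnion.1 hi.2
      have hS : S ∈ Tfam := hFTfam hSF
      rw [hTfam, Finset.mem_filter] at hS
      have hdge : d ≤ degI P i := by
        rw [hdegIP]
        calc d = S.card := hS.2.2.symm
          _ ≤ _ := Finset.le_sup (f := Finset.card)
              (Finset.mem_filter.2 ⟨Finset.mem_univ _, hiS, hS.2.1⟩)
      apply inv_anti₀ (by positivity)
      exact pow_le_pow_right₀ (by norm_num) hdge
    calc ∑ i ∈ (relSet f).filter (fun i => i ∈ H), ((2:ℝ) ^ degI P i)⁻¹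
        ≤ ∑ _i ∈ (relSet f).filter (fun i => i ∈ H), ((2:ℝ)^d)⁻¹ :=
          Finset.sum_le_sum hterm
      _ = (((relSet f).filter (fun i => i ∈ H)).card : ℝ) * ((2:ℝ)^d)⁻¹ := by
          rw [Finset.sum_const, nsmul_eq_mul]
      _ ≤ ((ℓ * d : ℕ) : ℝ) * ((2:ℝ)^d)⁻¹ := by
          apply mul_le_mul_of_nonneg_right _ (by positivity)
          have hsub : (relSet f).filter (fun i => i ∈ H) ⊆ H := by
            intro i hi
            exact (Finset.mem_filter.1 hi).2
          exact_mod_cast le_trans (Finset.card_le_card hsub) hHcard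
      _ = (ℓ : ℝ) * (d : ℝ) * ((2:ℝ)^d)⁻¹ := by push_cast; ring
  have hpartB : ∑ i ∈ (relSet f).filter (fun i => i ∉ H), ((2:ℝ) ^ degI P i)⁻¹ ≤ U := by
    have hstep1 : ∀ i ∈ (relSet f).filter (fun i => i ∉ H),
        ((2:ℝ) ^ degI P i)⁻¹ ≤ ((2:ℝ)^n)⁻¹ * ∑ α : Fin n → Bool, φ α i := by
      intro i hi
      rw [Finset.mem_filter] at hi
      have hrel : Relevant f i := (Finset.mem_filter.1 hi.1).2
      have happ : ∃ S, i ∈ S ∧ p S ≠ 0 := by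
        by_contra h
        push_neg at h
        obtain ⟨x, hx⟩ := hrel
        exact hx (S14.irrelevant_of_not_appears p f hrep i
          (fun S hS hiS => hS (h S hiS)) x)
      have havg := S14.averaging p H i hi.2 (S14.degI' p i) rfl happ
      rw [hdegIP]
      calc ((2:ℝ) ^ S14.degI' p i)⁻¹
          = ((2:ℝ)^n)⁻¹ * ((2:ℝ)^n * ((2:ℝ) ^ S14.degI' p i)⁻¹) := by
            rw [← mul_assoc, inv_mul_cancel₀ (by positivity), one_mul]
        _ ≤ ((2:ℝ)^n)⁻¹ * ∑ α : Fin n → Bool, φ α i := by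
            apply mul_le_mul_of_nonneg_left _ (by positivity)
            simp only [hφ]
            exact havg
    calc ∑ i ∈ (relSet f).filter (fun i => i ∉ H), ((2:ℝ) ^ degI P i)⁻¹
        ≤ ∑ i ∈ (relSet f).filter (fun i => i ∉ H),
            ((2:ℝ)^n)⁻¹ * ∑ α : Fin n → Bool, φ α i := Finset.sum_le_sum hstep1
      _ = ((2:ℝ)^n)⁻¹ * ∑ α : Fin n → Bool,
            ∑ i ∈ (relSet f).filter (fun i => i ∉ H), φ α i := by
          rw [← Finset.mul_sum]
          congr 1
          rw [Finset.sum_comm]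
      _ ≤ ((2:ℝ)^n)⁻¹ * ∑ _α : Fin n → Bool, U := by
          apply mul_le_mul_of_nonneg_left _ (by positivity)
          apply Finset.sum_le_sum
          intro α _
          exact le_trans (hφW α) (hWα α)
      _ = U := by
          rw [Finset.sum_const, Finset.card_univ]
          have hcard : (Fintype.card (Fin n → Bool)) = 2^n := by simp
          rw [hcard, nsmul_eq_mul]
          push_cast
          rw [← mul_assoc, inv_mul_cancel₀ (by positivity), one_mul]
  rw [hWsplit]
  linarith [hpartA, hpartB]
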